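/- (BSC-bound for H_α^J.) Fix α > 0, α ≠ 1, and suppose that for every fixed y ∈ I_α^H the map x ↦ κ_α^H(x,y) is convex on I_α^H, and likewise in the second argument for every fixed first argument. Then: if α > 1, H_α^J(X_1+X_2|Y_1Y_2) ≤ h_α( h_α^{-1}(H_α^J(X_1|Y_1)) ∗ h_α^{-1}(H_α^J(X_2|Y_2)) ); and if α < 1, H_α^J(X_1+X_2|Y_1Y_2) ≥ h_α( h_α^{-1}(H_α^J(X_1|Y_1)) ∗ h_α^{-1}(H_α^J(X_2|Y_2)) ). If instead κ_α^H is concave in each argument, the two inequalities hold with ≤ and ≥ exchanged. -/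

import Mathlib

open Real

noncomputable section

/-- Binary convolution `a∗b = a(1-b) + (1-a)b`. -/
def bconv (a b : ℝ) : ℝ := a * (1 - b) + (1 - a) * b

/-- Binary Rényi entropy `h_α(p) = (1/(1-α))·log(p^α + (1-p)^α)`. -/
def binH (α p : ℝ) : ℝ := (1 / (1 - α)) * Real.log (p ^ α + (1 - p) ^ α)

/-- Inverse of `h_α` as a map `[0, log 2] → [0, 1/2]`. -/
def binHInv (α : ℝ) : ℝ → ℝ := Function.invFunOn (binH α) (Set.Icc 0 (1/2))

/-- `k_α^A(p) = (p^α + (1-p)^α)^{1/α}`. -/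
def kA (α p : ℝ) : ℝ := (p ^ α + (1 - p) ^ α) ^ (1/α)

/-- Inverse of `k_α^A`, mapping `I_α^A` back to `[0,1/2]`. -/
def kAInv (α : ℝ) : ℝ → ℝ := Function.invFunOn (kA α) (Set.Icc 0 (1/2))

/-- `δ_α^A = 2^{(1-α)/α}`. -/
def deltaA (α : ℝ) : ℝ := (2 : ℝ) ^ ((1 - α)/α)

/-- The closed interval `I_α^A` with endpoints `1` and `δ_α^A`. -/
def IA (α : ℝ) : Set ℝ := Set.uIcc 1 (deltaA α)

/-- `κ_α^A(x,y) = k_α^A((k_α^A)⁻¹(x) ∗ (k_α^A)⁻¹(y))`. -/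
def kkA (α x y : ℝ) : ℝ := kA α (bconv (kAInv α x) (kAInv α y))

/-- `k_α^H(p) = p^α + (1-p)^α`. -/
def kH (α p : ℝ) : ℝ := p ^ α + (1 - p) ^ α

/-- Inverse of `k_α^H`, mapping `I_α^H` back to `[0,1/2]`. -/
def kHInv (α : ℝ) : ℝ → ℝ := Function.invFunOn (kH α) (Set.Icc 0 (1/2))

/-- `δ_α^H = 2^{1-α}`. -/
def deltaH (α : ℝ) : ℝ := (2 : ℝ) ^ (1 - α)

/-- The closed interval `I_α^H` with endpoints `1` and `δ_α^H`. -/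
def IH (α : ℝ) : Set ℝ := Set.uIcc 1 (deltaH α)

/-- `κ_α^H(x,y) = k_α^H((k_α^H)⁻¹(x) ∗ (k_α^H)⁻¹(y))`. -/
def kkH (α x y : ℝ) : ℝ := kH α (bconv (kHInv α x) (kHInv α y))

/-- `ĥ_α(x,y) = h_α(h_α⁻¹(x) ∗ h_α⁻¹(y))`. -/
def hhat (α x y : ℝ) : ℝ := binH α (bconv (binHInv α x) (binHInv α y))

/-- Marginal on `Y` of a joint pmf. -/
def margY {X Y : Type*} [Fintype X] (p : X → Y → ℝ) (y : Y) : ℝ := ∑ x, p x y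

/-- A joint pmf: nonnegative entries summing to one. -/
def IsPmf {X Y : Type*} [Fintype X] [Fintype Y] (p : X → Y → ℝ) : Prop :=
  (∀ x y, 0 ≤ p x y) ∧ ∑ x, ∑ y, p x y = 1

/-- Arimoto conditional Rényi entropy `H_α^A(X|Y)`. -/
def condA (α : ℝ) {X Y : Type*} [Fintype X] [Fintype Y] (p : X → Y → ℝ) : ℝ :=
  (α / (1 - α)) * Real.log (∑ y, margY p y * (∑ x, (p x y / margY p y) ^ α) ^ (1/α))

/-- Hayashi conditional Rényi entropy `H_α^H(X|Y)`. -/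
def condH (α : ℝ) {X Y : Type*} [Fintype X] [Fintype Y] (p : X → Y → ℝ) : ℝ :=
  (1 / (1 - α)) * Real.log (∑ y, ∑ x, margY p y * (p x y / margY p y) ^ α)

/-- Jizba–Arimitsu conditional Rényi entropy `H_α^J(X|Y)`. -/
def condJ (α : ℝ) {X Y : Type*} [Fintype X] [Fintype Y] (p : X → Y → ℝ) : ℝ :=
  (1 / (1 - α)) * (Real.log (∑ x, ∑ y, p x y ^ α) - Real.log (∑ y, margY p y ^ α))

/-- Cachin conditional Rényi entropy `H_α^C(X|Y)`. -/
def condC (α : ℝ) {X Y : Type*} [Fintype X] [Fintype Y] (p : X → Y → ℝ) : ℝ :=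
  (1 / (1 - α)) * ∑ y, margY p y * Real.log (∑ x, (p x y / margY p y) ^ α)

/-- `K_α^A(X|Y) = exp(((1-α)/α)·H_α^A(X|Y))`. -/
def KA (α : ℝ) {X Y : Type*} [Fintype X] [Fintype Y] (p : X → Y → ℝ) : ℝ :=
  Real.exp (((1 - α)/α) * condA α p)

/-- `K_α^H(X|Y) = exp((1-α)·H_α^H(X|Y))`. -/
def KH (α : ℝ) {X Y : Type*} [Fintype X] [Fintype Y] (p : X → Y → ℝ) : ℝ :=
  Real.exp ((1 - α) * condH α p)

/-- `K_α^J(X|Y) = exp((1-α)·H_α^J(X|Y))`. -/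
def KJ (α : ℝ) {X Y : Type*} [Fintype X] [Fintype Y] (p : X → Y → ℝ) : ℝ :=
  Real.exp ((1 - α) * condJ α p)

/-- Joint pmf of `(X₁+X₂, (Y₁,Y₂))` for independent pairs `(X₁,Y₁)`, `(X₂,Y₂)`. -/
def combine {Y1 Y2 : Type*} (p1 : Bool → Y1 → ℝ) (p2 : Bool → Y2 → ℝ) :
    Bool → Y1 × Y2 → ℝ :=
  fun z y => ∑ x : Bool, p1 x y.1 * p2 (Bool.xor x z) y.2

/-- `k_∞^A(p) = max{p, 1-p}`. -/
def kInf (p : ℝ) : ℝ := max p (1 - p)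

/-- Binary min-entropy `h_∞(p) = -log max{p, 1-p}`. -/
def binHInf (p : ℝ) : ℝ := - Real.log (max p (1 - p))

/-- Inverse of the restriction of `h_∞` to `[0,1/2]`. -/
def binHInfInv : ℝ → ℝ := Function.invFunOn binHInf (Set.Icc 0 (1/2))

/-- Conditional min-entropy `H_∞(X|Y)` for binary `X`. -/
def condInf {Y : Type*} [Fintype Y] (p : Bool → Y → ℝ) : ℝ :=
  - Real.log (∑ y, margY p y * max (p false y / margY p y) (p true y / margY p y))

/-- Unconditional Rényi entropy of a finitely supported distribution. -/
def renyiEnt (α : ℝ) {X : Type*} [Fintype X] (p : X → ℝ) : ℝ :=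
  (1 / (1 - α)) * Real.log (∑ x, p x ^ α)

/-- Distribution of the mod-2 sum of two independent binary random variables. -/
def sumDist (p1 p2 : Bool → ℝ) : Bool → ℝ := fun z => ∑ x : Bool, p1 x * p2 (Bool.xor x z)

lemma kH_symm (α p : ℝ) : kH α (1 - p) = kH α p := by
  unfold kH; rw [show (1:ℝ) - (1-p) = p by ring, add_comm]

lemma kH_pos {α : ℝ} (hα : 0 < α) {p : ℝ} (hp : p ∈ Set.Icc (0:ℝ) 1) : 0 < kH α p := by
  rcases lt_or_eq_of_le hp.2 with h | h
  · have h1 : 0 < (1 - p) ^ α := Real.rpow_pos_of_pos (by linarith) α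
    have h2 : 0 ≤ p ^ α := Real.rpow_nonneg hp.1 α
    unfold kH; linarith
  · rw [h]; simp [kH, Real.one_rpow, Real.zero_rpow hα.ne']

lemma kH_zero {α : ℝ} (hα : 0 < α) : kH α 0 = 1 := by
  simp [kH, Real.zero_rpow hα.ne', Real.one_rpow]

lemma kH_half {α : ℝ} (hα : 0 < α) : kH α (1/2) = deltaH α := by
  unfold kH deltaH
  rw [show (1:ℝ) - 1/2 = 1/2 by ring]
  rw [show ((1:ℝ)/2) = 2⁻¹ by norm_num, Real.inv_rpow (by norm_num), ← Real.rpow_neg (by norm_num)]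
  rw [show (1:ℝ) - α = 1 + -α by ring, Real.rpow_add two_pos, Real.rpow_one]
  ring

lemma cont_kH {α : ℝ} (hα : 0 < α) : Continuous (kH α) := by
  have h1 : Continuous fun p : ℝ => p ^ α := by
    rw [continuous_iff_continuousAt]; intro x
    exact Real.continuousAt_rpow_const x α (Or.inr hα.le)
  show Continuous fun p : ℝ => p ^ α + (1-p) ^ α
  exact h1.add (h1.comp (continuous_const.sub continuous_id))

lemma IH_subset_image {α : ℝ} (hα : 0 < α) : IH α ⊆ kH α '' Set.Icc 0 (1/2) := by
  have h := intermediate_value_uIcc (a := (0:ℝ)) (b := 1/2) (f := kH α) ((cont_kH hα).continuousOn)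
  rw [Set.uIcc_of_le (by norm_num : (0:ℝ) ≤ 1/2)] at h
  rw [kH_zero hα, kH_half hα] at h
  exact h

lemma kH_hasDerivAt {α : ℝ} (hα : 0 < α) {p : ℝ} (h0 : 0 < p) (h1 : p < 1) :
    HasDerivAt (kH α) (α * p ^ (α - 1) - α * (1 - p) ^ (α - 1)) p := by
  have A : HasDerivAt (fun x : ℝ => x ^ α) (α * p ^ (α - 1)) p :=
    Real.hasDerivAt_rpow_const (Or.inl h0.ne')
  have hb : HasDerivAt (fun x : ℝ => 1 - x) (-1) p := by
    simpa using (hasDerivAt_id p).const_sub 1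
  have B := (Real.hasDerivAt_rpow_const (x := 1 - p) (p := α)
      (Or.inl (by linarith : (1:ℝ) - p ≠ 0))).comp p hb
  have := A.add B
  refine HasDerivAt.congr_deriv (f := kH α) this ?_
  ring

lemma kH_strictAntiOn {α : ℝ} (h : 1 < α) : StrictAntiOn (kH α) (Set.Icc 0 (1/2)) := by
  have hα : 0 < α := lt_trans one_pos h
  apply strictAntiOn_of_deriv_neg (convex_Icc _ _) ((cont_kH hα).continuousOn)
  intro p hp
  rw [interior_Icc] at hp
  have hd := kH_hasDerivAt hα hp.1 (by linarith [hp.2])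
  rw [hd.deriv]
  have : p ^ (α-1) < (1-p) ^ (α-1) :=
    Real.rpow_lt_rpow hp.1.le (by linarith [hp.2]) (by linarith)
  nlinarith

lemma kH_strictMonoOn {α : ℝ} (hα : 0 < α) (h : α < 1) :
    StrictMonoOn (kH α) (Set.Icc 0 (1/2)) := by
  apply strictMonoOn_of_deriv_pos (convex_Icc _ _) ((cont_kH hα).continuousOn)
  intro p hp
  rw [interior_Icc] at hp
  have hd := kH_hasDerivAt hα hp.1 (by linarith [hp.2])
  rw [hd.deriv]
  have : (1-p) ^ (α-1) < p ^ (α-1) :=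
    Real.rpow_lt_rpow_of_neg hp.1 (by linarith [hp.2]) (by linarith)
  nlinarith

lemma kH_injOn {α : ℝ} (hα : 0 < α) (hα1 : α ≠ 1) : Set.InjOn (kH α) (Set.Icc 0 (1/2)) := by
  rcases lt_or_gt_of_ne hα1 with h | h
  · exact (kH_strictMonoOn hα h).injOn
  · exact (kH_strictAntiOn h).injOn

lemma kH_mem_IH {α : ℝ} (hα : 0 < α) (hα1 : α ≠ 1) {p : ℝ}
    (hp : p ∈ Set.Icc (0:ℝ) 1) : kH α p ∈ IH α := by
  have key : ∀ q ∈ Set.Icc (0:ℝ) (1/2), kH α q ∈ IH α := by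
    intro q hq
    have h0 : (0:ℝ) ∈ Set.Icc (0:ℝ) (1/2) := by norm_num
    have hh : (1/2:ℝ) ∈ Set.Icc (0:ℝ) (1/2) := by norm_num
    rcases lt_or_gt_of_ne hα1 with h | h
    · have m := (kH_strictMonoOn hα h).monotoneOn
      have h1 := m h0 hq hq.1
      have h2 := m hq hh hq.2
      rw [kH_zero hα] at h1; rw [kH_half hα] at h2
      exact Set.Icc_subset_uIcc ⟨h1, h2⟩
    · have m := (kH_strictAntiOn h).antitoneOn
      have h1 := m h0 hq hq.1
      have h2 := m hq hh hq.2
      rw [kH_zero hα] at h1; rw [kH_half hα] at h2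
      exact Set.Icc_subset_uIcc' ⟨h2, h1⟩
  rcases le_or_gt p (1/2) with h | h
  · exact key p ⟨hp.1, h⟩
  · rw [← kH_symm]; exact key (1-p) ⟨by linarith [hp.2], by linarith⟩

lemma kHInv_spec {α : ℝ} (hα : 0 < α) {t : ℝ} (ht : t ∈ IH α) :
    kHInv α t ∈ Set.Icc (0:ℝ) (1/2) ∧ kH α (kHInv α t) = t := by
  obtain ⟨c, hc, hct⟩ := IH_subset_image hα ht
  exact ⟨Function.invFunOn_mem ⟨c, hc, hct⟩, Function.invFunOn_eq ⟨c, hc, hct⟩⟩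

lemma bconv_comm (a b : ℝ) : bconv a b = bconv b a := by unfold bconv; ring

lemma bconv_mem {a b : ℝ} (ha : a ∈ Set.Icc (0:ℝ) 1) (hb : b ∈ Set.Icc (0:ℝ) 1) :
    bconv a b ∈ Set.Icc (0:ℝ) 1 := by
  obtain ⟨ha1, ha2⟩ := ha; obtain ⟨hb1, hb2⟩ := hb
  constructor
  · unfold bconv; nlinarith
  · unfold bconv; nlinarith

lemma kH_eq_cases {α : ℝ} (hα : 0 < α) (hα1 : α ≠ 1) {a c : ℝ}
    (ha : a ∈ Set.Icc (0:ℝ) 1) (hc : c ∈ Set.Icc (0:ℝ) (1/2))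
    (h : kH α a = kH α c) : a = c ∨ a = 1 - c := by
  rcases le_or_gt a (1/2) with h' | h'
  · exact Or.inl (kH_injOn hα hα1 ⟨ha.1, h'⟩ hc h)
  · right
    have h2 : kH α (1-a) = kH α c := by rw [kH_symm]; exact h
    have := kH_injOn hα hα1 ⟨by linarith [ha.2], by linarith⟩ hc h2
    linarith

lemma kH_bconv_eq {α : ℝ} (hα : 0 < α) (hα1 : α ≠ 1) {a b : ℝ}
    (ha : a ∈ Set.Icc (0:ℝ) 1) (hb : b ∈ Set.Icc (0:ℝ) 1) :
    kH α (bconv a b) = kkH α (kH α a) (kH α b) := by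
  obtain ⟨hc1, hc2⟩ := kHInv_spec hα (kH_mem_IH hα hα1 ha)
  obtain ⟨hd1, hd2⟩ := kHInv_spec hα (kH_mem_IH hα hα1 hb)
  unfold kkH
  set c := kHInv α (kH α a) with hcdef
  set d := kHInv α (kH α b) with hddef
  have step1 : kH α (bconv a b) = kH α (bconv c b) := by
    rcases kH_eq_cases hα hα1 ha hc1 hc2.symm with h | h
    · rw [h]
    · rw [h, show bconv (1-c) b = 1 - bconv c b by unfold bconv; ring, kH_symm]
  have step2 : kH α (bconv c b) = kH α (bconv c d) := by
    rcases kH_eq_cases hα hα1 hb hd1 hd2.symm with h | h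
    · rw [h]
    · rw [h, show bconv c (1-d) = 1 - bconv c d by unfold bconv; ring, kH_symm]
  rw [step1, step2]

def Sj (α : ℝ) {X Y : Type*} [Fintype X] [Fintype Y] (p : X → Y → ℝ) : ℝ :=
  ∑ x, ∑ y, p x y ^ α

def Mj (α : ℝ) {X Y : Type*} [Fintype X] [Fintype Y] (p : X → Y → ℝ) : ℝ :=
  ∑ y, margY p y ^ α

def Tj (α : ℝ) {X Y : Type*} [Fintype X] [Fintype Y] (p : X → Y → ℝ) : ℝ :=
  Sj α p / Mj α p

def uJ (α : ℝ) {Y : Type*} [Fintype Y] (p : Bool → Y → ℝ) (y : Y) : ℝ :=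
  if 0 < margY p y then kH α (p false y / margY p y) else 1

section PMF
variable {Y : Type*} [Fintype Y] {α : ℝ} {p : Bool → Y → ℝ}

lemma margY_nonneg (hp : IsPmf p) (y : Y) : 0 ≤ margY p y :=
  Finset.sum_nonneg fun x _ => hp.1 x y

lemma margY_bool (p : Bool → Y → ℝ) (y : Y) : margY p y = p false y + p true y := by
  simp [margY, Fintype.sum_bool]; ring

lemma margY_sum_one (hp : IsPmf p) : ∑ y, margY p y = 1 := by
  rw [← hp.2, Finset.sum_comm]; rfl

lemma exists_margY_pos (hp : IsPmf p) : ∃ y, 0 < margY p y := by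
  by_contra hc
  push_neg at hc
  have : ∑ y, margY p y ≤ 0 := Finset.sum_nonpos fun y _ => hc y
  rw [margY_sum_one hp] at this; linarith

lemma Mj_pos (hα : 0 < α) (hp : IsPmf p) : 0 < Mj α p := by
  obtain ⟨y0, hy0⟩ := exists_margY_pos hp
  apply Finset.sum_pos' (fun y _ => Real.rpow_nonneg (margY_nonneg hp y) α)
  exact ⟨y0, Finset.mem_univ y0, Real.rpow_pos_of_pos hy0 α⟩

lemma exists_entry_pos (hp : IsPmf p) : ∃ x y, 0 < p x y := by
  by_contra hc
  push_neg at hc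
  have h1 : ∑ x, ∑ y, p x y ≤ 0 :=
    Finset.sum_nonpos fun x _ => Finset.sum_nonpos fun y _ => hc x y
  rw [hp.2] at h1; linarith

lemma Sj_pos (hα : 0 < α) (hp : IsPmf p) : 0 < Sj α p := by
  obtain ⟨x0, y0, h0⟩ := exists_entry_pos hp
  apply Finset.sum_pos' (fun x _ => Finset.sum_nonneg fun y _ => Real.rpow_nonneg (hp.1 x y) α)
  refine ⟨x0, Finset.mem_univ x0, Finset.sum_pos' (fun y _ => Real.rpow_nonneg (hp.1 x0 y) α) ?_⟩
  exact ⟨y0, Finset.mem_univ y0, Real.rpow_pos_of_pos h0 α⟩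

lemma Tj_pos (hα : 0 < α) (hp : IsPmf p) : 0 < Tj α p :=
  div_pos (Sj_pos hα hp) (Mj_pos hα hp)

lemma condJ_eq (hα : 0 < α) (hp : IsPmf p) :
    condJ α p = (1/(1-α)) * Real.log (Tj α p) := by
  rw [condJ, Tj, Real.log_div (Sj_pos hα hp).ne' (Mj_pos hα hp).ne']
  rfl

lemma entry_le_margY (hp : IsPmf p) (x : Bool) (y : Y) : p x y ≤ margY p y := by
  rw [margY_bool]
  cases x
  · linarith [hp.1 true y]
  · linarith [hp.1 false y]

lemma cond_mem (hp : IsPmf p) {y : Y} (hy : 0 < margY p y) :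
    p false y / margY p y ∈ Set.Icc (0:ℝ) 1 :=
  ⟨div_nonneg (hp.1 false y) hy.le, (div_le_one hy).2 (entry_le_margY hp false y)⟩

lemma uJ_mem (hα : 0 < α) (hα1 : α ≠ 1) (hp : IsPmf p) (y : Y) : uJ α p y ∈ IH α := by
  unfold uJ
  split_ifs with h
  · exact kH_mem_IH hα hα1 (cond_mem hp h)
  · exact Set.left_mem_uIcc

lemma entry_zero (hp : IsPmf p) {y : Y} (hy : margY p y = 0) (x : Bool) : p x y = 0 := by
  have h := entry_le_margY hp x y
  have := hp.1 x y
  linarith [hy ▸ h]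

lemma row_eq (hα : 0 < α) (hp : IsPmf p) (y : Y) :
    ∑ x : Bool, p x y ^ α = margY p y ^ α * uJ α p y := by
  rcases (margY_nonneg hp y).lt_or_eq with h | h
  · have hm : margY p y ≠ 0 := h.ne'
    have e : ∀ x : Bool, p x y ^ α = margY p y ^ α * (p x y / margY p y) ^ α := by
      intro x
      rw [← Real.mul_rpow h.le (div_nonneg (hp.1 x y) h.le), mul_div_cancel₀ _ hm]
    rw [Fintype.sum_bool, e true, e false, uJ, if_pos h, kH]
    have e2 : 1 - p false y / margY p y = p true y / margY p y := by
      field_simp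
      rw [margY_bool]; ring
    rw [e2]; ring
  · rw [uJ, if_neg (by rw [← h]; exact lt_irrefl _), ← h,
      Real.zero_rpow hα.ne']
    simp [entry_zero hp h.symm, Real.zero_rpow hα.ne']

lemma Sj_eq (hα : 0 < α) (hp : IsPmf p) :
    Sj α p = ∑ y, margY p y ^ α * uJ α p y := by
  rw [Sj, Finset.sum_comm]
  exact Finset.sum_congr rfl fun y _ => row_eq hα hp y

lemma weight_sum (hα : 0 < α) (hp : IsPmf p) :
    ∑ y, margY p y ^ α / Mj α p = 1 := by
  rw [← Finset.sum_div, ← Mj, div_self (Mj_pos hα hp).ne']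

lemma Tj_sum (hα : 0 < α) (hp : IsPmf p) :
    Tj α p = ∑ y, (margY p y ^ α / Mj α p) * uJ α p y := by
  rw [Tj, Sj_eq hα hp, Finset.sum_div]
  exact Finset.sum_congr rfl fun y _ => by ring

lemma Tj_mem (hα : 0 < α) (hα1 : α ≠ 1) (hp : IsPmf p) : Tj α p ∈ IH α := by
  rw [Tj_sum hα hp]
  have hconv : Convex ℝ (IH α) := by rw [IH]; exact convex_uIcc _ _
  have := hconv.sum_mem (t := Finset.univ)
    (fun y _ => div_nonneg (Real.rpow_nonneg (margY_nonneg hp y) α) (Mj_pos hα hp).le)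
    (weight_sum hα hp) (fun y _ => uJ_mem hα hα1 hp y)
  simpa [smul_eq_mul] using this

end PMF

section Combine
variable {Y1 Y2 : Type*} [Fintype Y1] [Fintype Y2] {α : ℝ}
  {p1 : Bool → Y1 → ℝ} {p2 : Bool → Y2 → ℝ}

lemma margY_combine (p1 : Bool → Y1 → ℝ) (p2 : Bool → Y2 → ℝ) (y : Y1 × Y2) :
    margY (combine p1 p2) y = margY p1 y.1 * margY p2 y.2 := by
  simp [margY, combine, Fintype.sum_bool]
  ring

lemma combine_isPmf (hp1 : IsPmf p1) (hp2 : IsPmf p2) : IsPmf (combine p1 p2) := by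
  constructor
  · intro z y
    exact Finset.sum_nonneg fun x _ =>
      mul_nonneg (hp1.1 x y.1) (hp2.1 (Bool.xor x z) y.2)
  · have h1 := hp1.2
    have h2 := hp2.2
    rw [Fintype.sum_bool] at h1 h2
    simp only [combine, Fintype.sum_bool, Fintype.sum_prod_type]
    simp only [Bool.xor_false, Bool.xor_true, Bool.not_true, Bool.not_false]
    simp only [Finset.sum_add_distrib, ← Finset.sum_mul, ← Finset.mul_sum]
    nlinarith [h1, h2]

lemma combine_false (y : Y1 × Y2) :
    combine p1 p2 false y = p1 false y.1 * p2 false y.2 + p1 true y.1 * p2 true y.2 := by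
  simp [combine, Fintype.sum_bool]; ring

lemma row_combine (hα : 0 < α) (hα1 : α ≠ 1) (hp1 : IsPmf p1) (hp2 : IsPmf p2)
    (y : Y1 × Y2) :
    margY (combine p1 p2) y ^ α * uJ α (combine p1 p2) y =
      margY p1 y.1 ^ α * margY p2 y.2 ^ α * kkH α (uJ α p1 y.1) (uJ α p2 y.2) := by
  rcases (margY_nonneg hp1 y.1).lt_or_eq with h1 | h1
  · rcases (margY_nonneg hp2 y.2).lt_or_eq with h2 | h2
    · have hm : 0 < margY (combine p1 p2) y := by
        rw [margY_combine]; exact mul_pos h1 h2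
      have hb1 := margY_bool p1 y.1
      have hb2 := margY_bool p2 y.2
      have hacomb : combine p1 p2 false y / margY (combine p1 p2) y
          = 1 - bconv (p1 false y.1 / margY p1 y.1) (p2 false y.2 / margY p2 y.2) := by
        rw [margY_combine, combine_false, bconv]
        field_simp
        rw [hb1, hb2]
        ring
      have hu : uJ α (combine p1 p2) y
          = kH α (bconv (p1 false y.1 / margY p1 y.1) (p2 false y.2 / margY p2 y.2)) := by
        rw [uJ, if_pos hm, hacomb, kH_symm]
      have hu1 : uJ α p1 y.1 = kH α (p1 false y.1 / margY p1 y.1) := by rw [uJ, if_pos h1]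
      have hu2 : uJ α p2 y.2 = kH α (p2 false y.2 / margY p2 y.2) := by rw [uJ, if_pos h2]
      rw [hu, hu1, hu2, ← kH_bconv_eq hα hα1 (cond_mem hp1 h1) (cond_mem hp2 h2)]
      rw [margY_combine, Real.mul_rpow h1.le h2.le]
    · rw [margY_combine, ← h2, mul_zero, Real.zero_rpow hα.ne']
      simp [Real.zero_rpow hα.ne', ← h2]
  · rw [margY_combine, ← h1, zero_mul, Real.zero_rpow hα.ne']
    simp [Real.zero_rpow hα.ne', ← h1]

lemma Mj_combine (hα : 0 < α) (hp1 : IsPmf p1) (hp2 : IsPmf p2) :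
    Mj α (combine p1 p2) = Mj α p1 * Mj α p2 := by
  rw [Mj, Mj, Mj, Fintype.sum_prod_type, Finset.sum_mul_sum]
  refine Finset.sum_congr rfl fun y1 _ => Finset.sum_congr rfl fun y2 _ => ?_
  rw [margY_combine]
  exact Real.mul_rpow (margY_nonneg hp1 y1) (margY_nonneg hp2 y2)

lemma Tj_combine (hα : 0 < α) (hα1 : α ≠ 1) (hp1 : IsPmf p1) (hp2 : IsPmf p2) :
    Tj α (combine p1 p2) = ∑ y1, (margY p1 y1 ^ α / Mj α p1) *
      ∑ y2, (margY p2 y2 ^ α / Mj α p2) * kkH α (uJ α p1 y1) (uJ α p2 y2) := by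
  have hM1 := Mj_pos hα hp1
  have hM2 := Mj_pos hα hp2
  rw [Tj, Sj_eq hα (combine_isPmf hp1 hp2), Mj_combine hα hp1 hp2]
  rw [Fintype.sum_prod_type, Finset.sum_div]
  refine Finset.sum_congr rfl fun y1 _ => ?_
  rw [Finset.sum_div, Finset.mul_sum]
  refine Finset.sum_congr rfl fun y2 _ => ?_
  rw [row_combine hα hα1 hp1 hp2 (y1, y2)]
  field_simp

end Combine

section Jensen
variable {Y1 Y2 : Type*} [Fintype Y1] [Fintype Y2] {α : ℝ}
  {p1 : Bool → Y1 → ℝ} {p2 : Bool → Y2 → ℝ}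

lemma jensen_convex (hα : 0 < α) (hα1 : α ≠ 1)
    (hcv1 : ∀ y ∈ IH α, ConvexOn ℝ (IH α) fun x => kkH α x y)
    (hcv2 : ∀ x ∈ IH α, ConvexOn ℝ (IH α) fun y => kkH α x y)
    (hp1 : IsPmf p1) (hp2 : IsPmf p2) :
    kkH α (Tj α p1) (Tj α p2) ≤ Tj α (combine p1 p2) := by
  have hw1 : ∀ y ∈ Finset.univ, 0 ≤ margY p1 y ^ α / Mj α p1 :=
    fun y _ => div_nonneg (Real.rpow_nonneg (margY_nonneg hp1 y) α) (Mj_pos hα hp1).le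
  have hw2 : ∀ y ∈ Finset.univ, 0 ≤ margY p2 y ^ α / Mj α p2 :=
    fun y _ => div_nonneg (Real.rpow_nonneg (margY_nonneg hp2 y) α) (Mj_pos hα hp2).le
  have hs1 : ∑ y, margY p1 y ^ α / Mj α p1 = 1 := weight_sum hα hp1
  have hs2 : ∑ y, margY p2 y ^ α / Mj α p2 = 1 := weight_sum hα hp2
  have hu1 : ∀ y ∈ Finset.univ, uJ α p1 y ∈ IH α := fun y _ => uJ_mem hα hα1 hp1 y
  have hu2 : ∀ y ∈ Finset.univ, uJ α p2 y ∈ IH α := fun y _ => uJ_mem hα hα1 hp2 y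
  have hT2 : Tj α p2 ∈ IH α := Tj_mem hα hα1 hp2
  rw [Tj_combine hα hα1 hp1 hp2]
  have step2 : kkH α (Tj α p1) (Tj α p2)
      ≤ ∑ y1, (margY p1 y1 ^ α / Mj α p1) * kkH α (uJ α p1 y1) (Tj α p2) := by
    have := (hcv1 (Tj α p2) hT2).map_sum_le hw1 hs1 hu1
    rw [Tj_sum hα hp1]
    simpa [smul_eq_mul] using this
  refine step2.trans (Finset.sum_le_sum fun y1 _ => ?_)
  refine mul_le_mul_of_nonneg_left ?_ (hw1 y1 (Finset.mem_univ y1))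
  have := (hcv2 (uJ α p1 y1) (uJ_mem hα hα1 hp1 y1)).map_sum_le hw2 hs2 hu2
  calc kkH α (uJ α p1 y1) (Tj α p2)
      = (fun y => kkH α (uJ α p1 y1) y) (∑ y2, (margY p2 y2 ^ α / Mj α p2) • uJ α p2 y2) := by
        rw [Tj_sum hα hp2]; simp [smul_eq_mul]
    _ ≤ _ := by simpa [smul_eq_mul] using this

lemma jensen_concave (hα : 0 < α) (hα1 : α ≠ 1)
    (hcv1 : ∀ y ∈ IH α, ConcaveOn ℝ (IH α) fun x => kkH α x y)
    (hcv2 : ∀ x ∈ IH α, ConcaveOn ℝ (IH α) fun y => kkH α x y)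
    (hp1 : IsPmf p1) (hp2 : IsPmf p2) :
    Tj α (combine p1 p2) ≤ kkH α (Tj α p1) (Tj α p2) := by
  have hw1 : ∀ y ∈ Finset.univ, 0 ≤ margY p1 y ^ α / Mj α p1 :=
    fun y _ => div_nonneg (Real.rpow_nonneg (margY_nonneg hp1 y) α) (Mj_pos hα hp1).le
  have hw2 : ∀ y ∈ Finset.univ, 0 ≤ margY p2 y ^ α / Mj α p2 :=
    fun y _ => div_nonneg (Real.rpow_nonneg (margY_nonneg hp2 y) α) (Mj_pos hα hp2).le
  have hs1 : ∑ y, margY p1 y ^ α / Mj α p1 = 1 := weight_sum hα hp1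
  have hs2 : ∑ y, margY p2 y ^ α / Mj α p2 = 1 := weight_sum hα hp2
  have hu1 : ∀ y ∈ Finset.univ, uJ α p1 y ∈ IH α := fun y _ => uJ_mem hα hα1 hp1 y
  have hu2 : ∀ y ∈ Finset.univ, uJ α p2 y ∈ IH α := fun y _ => uJ_mem hα hα1 hp2 y
  have hT2 : Tj α p2 ∈ IH α := Tj_mem hα hα1 hp2
  rw [Tj_combine hα hα1 hp1 hp2]
  have step2 : ∑ y1, (margY p1 y1 ^ α / Mj α p1) * kkH α (uJ α p1 y1) (Tj α p2)
      ≤ kkH α (Tj α p1) (Tj α p2) := by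
    have := (hcv1 (Tj α p2) hT2).le_map_sum hw1 hs1 hu1
    rw [Tj_sum hα hp1]
    simpa [smul_eq_mul] using this
  refine le_trans (Finset.sum_le_sum fun y1 _ => ?_) step2
  refine mul_le_mul_of_nonneg_left ?_ (hw1 y1 (Finset.mem_univ y1))
  have := (hcv2 (uJ α p1 y1) (uJ_mem hα hα1 hp1 y1)).le_map_sum hw2 hs2 hu2
  calc ∑ y2, (margY p2 y2 ^ α / Mj α p2) * kkH α (uJ α p1 y1) (uJ α p2 y2)
      ≤ (fun y => kkH α (uJ α p1 y1) y) (∑ y2, (margY p2 y2 ^ α / Mj α p2) • uJ α p2 y2) := by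
        simpa [smul_eq_mul] using this
    _ = kkH α (uJ α p1 y1) (Tj α p2) := by rw [Tj_sum hα hp2]; simp [smul_eq_mul]

end Jensen

section Final
variable {Y : Type*} [Fintype Y] {α : ℝ} {p : Bool → Y → ℝ}

lemma binH_eq_kH (α q : ℝ) : binH α q = (1/(1-α)) * Real.log (kH α q) := rfl

lemma binHInv_mem_and_eq (hα : 0 < α) (hα1 : α ≠ 1) (hp : IsPmf p) :
    binHInv α (condJ α p) ∈ Set.Icc (0:ℝ) (1/2) ∧
    kH α (binHInv α (condJ α p)) = Tj α p := by
  obtain ⟨c, hc, hck⟩ := IH_subset_image hα (Tj_mem hα hα1 hp)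
  have hbc : binH α c = condJ α p := by
    rw [binH_eq_kH, hck, condJ_eq hα hp]
  have hmem : binHInv α (condJ α p) ∈ Set.Icc (0:ℝ) (1/2) :=
    Function.invFunOn_mem ⟨c, hc, hbc⟩
  have heq : binH α (binHInv α (condJ α p)) = condJ α p :=
    Function.invFunOn_eq ⟨c, hc, hbc⟩
  refine ⟨hmem, ?_⟩
  have heq2 : (1/(1-α)) * Real.log (kH α (binHInv α (condJ α p)))
      = (1/(1-α)) * Real.log (Tj α p) := by
    rw [← binH_eq_kH, heq, condJ_eq hα hp]
  have h1ne : (1:ℝ)/(1-α) ≠ 0 := by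
    have h2 : (1:ℝ) - α ≠ 0 := sub_ne_zero.2 fun h => hα1 h.symm
    simpa using h2
  have hlog := mul_left_cancel₀ h1ne heq2
  have hk : 0 < kH α (binHInv α (condJ α p)) :=
    kH_pos hα ⟨hmem.1, by linarith [hmem.2]⟩
  exact Real.log_injOn_pos (Set.mem_Ioi.2 hk) (Set.mem_Ioi.2 (Tj_pos hα hp)) hlog

lemma kHInv_Tj (hα : 0 < α) (hα1 : α ≠ 1) (hp : IsPmf p) :
    kHInv α (Tj α p) = binHInv α (condJ α p) := by
  obtain ⟨hm, he⟩ := binHInv_mem_and_eq hα hα1 hp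
  obtain ⟨hm', he'⟩ := kHInv_spec hα (Tj_mem hα hα1 hp)
  exact kH_injOn hα hα1 hm' hm (by rw [he', he])

end Final


/-- BSC-bound for the Jizba–Arimitsu conditional Rényi entropy,
under convexity/concavity of `κ_α^H`. -/
theorem stmt_11 (α : ℝ) (hα : 0 < α) (hα1 : α ≠ 1)
    {Y1 Y2 : Type*} [Fintype Y1] [Fintype Y2]
    (p1 : Bool → Y1 → ℝ) (p2 : Bool → Y2 → ℝ)
    (hp1 : IsPmf p1) (hp2 : IsPmf p2) :
    (((∀ y ∈ IH α, ConvexOn ℝ (IH α) (fun x => kkH α x y)) ∧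
      (∀ x ∈ IH α, ConvexOn ℝ (IH α) (fun y => kkH α x y))) →
      (1 < α → condJ α (combine p1 p2) ≤
          binH α (bconv (binHInv α (condJ α p1)) (binHInv α (condJ α p2)))) ∧
      (α < 1 → binH α (bconv (binHInv α (condJ α p1)) (binHInv α (condJ α p2))) ≤
          condJ α (combine p1 p2))) ∧
    (((∀ y ∈ IH α, ConcaveOn ℝ (IH α) (fun x => kkH α x y)) ∧
      (∀ x ∈ IH α, ConcaveOn ℝ (IH α) (fun y => kkH α x y))) →
      (1 < α → binH α (bconv (binHInv α (condJ α p1)) (binHInv α (condJ α p2))) ≤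
          condJ α (combine p1 p2)) ∧
      (α < 1 → condJ α (combine p1 p2) ≤
          binH α (bconv (binHInv α (condJ α p1)) (binHInv α (condJ α p2))))) := by
  have hcomb : IsPmf (combine p1 p2) := combine_isPmf hp1 hp2
  have hkkeq : kkH α (Tj α p1) (Tj α p2)
      = kH α (bconv (binHInv α (condJ α p1)) (binHInv α (condJ α p2))) := by
    rw [kkH, kHInv_Tj hα hα1 hp1, kHInv_Tj hα hα1 hp2]
  have hb1 := (binHInv_mem_and_eq hα hα1 hp1).1
  have hb2 := (binHInv_mem_and_eq hα hα1 hp2).1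
  have hbmem : bconv (binHInv α (condJ α p1)) (binHInv α (condJ α p2)) ∈ Set.Icc (0:ℝ) 1 :=
    bconv_mem ⟨hb1.1, by linarith [hb1.2]⟩ ⟨hb2.1, by linarith [hb2.2]⟩
  have hkkpos : 0 < kkH α (Tj α p1) (Tj α p2) := by rw [hkkeq]; exact kH_pos hα hbmem
  have hbinH : binH α (bconv (binHInv α (condJ α p1)) (binHInv α (condJ α p2)))
      = (1/(1-α)) * Real.log (kkH α (Tj α p1) (Tj α p2)) := by
    rw [binH_eq_kH, hkkeq]
  have hcond : condJ α (combine p1 p2) = (1/(1-α)) * Real.log (Tj α (combine p1 p2)) :=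
    condJ_eq hα hcomb
  have hTpos : 0 < Tj α (combine p1 p2) := Tj_pos hα hcomb
  constructor
  · rintro ⟨hcv1, hcv2⟩
    have hle := jensen_convex hα hα1 hcv1 hcv2 hp1 hp2
    have hlog : Real.log (kkH α (Tj α p1) (Tj α p2)) ≤ Real.log (Tj α (combine p1 p2)) :=
      Real.log_le_log hkkpos hle
    constructor
    · intro h1
      rw [hcond, hbinH]
      have hc : (1:ℝ)/(1-α) ≤ 0 :=
        (div_neg_of_pos_of_neg one_pos (by linarith)).le
      exact mul_le_mul_of_nonpos_left hlog hc
    · intro h1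
      rw [hcond, hbinH]
      have hc : (0:ℝ) ≤ 1/(1-α) := div_nonneg zero_le_one (by linarith)
      exact mul_le_mul_of_nonneg_left hlog hc
  · rintro ⟨hcv1, hcv2⟩
    have hle := jensen_concave hα hα1 hcv1 hcv2 hp1 hp2
    have hlog : Real.log (Tj α (combine p1 p2)) ≤ Real.log (kkH α (Tj α p1) (Tj α p2)) :=
      Real.log_le_log hTpos hle
    constructor
    · intro h1
      rw [hcond, hbinH]
      have hc : (1:ℝ)/(1-α) ≤ 0 :=
        (div_neg_of_pos_of_neg one_pos (by linarith)).le
      exact mul_le_mul_of_nonpos_left hlog hc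
    · intro h1
      rw [hcond, hbinH]
      have hc : (0:ℝ) ≤ 1/(1-α) := div_nonneg zero_le_one (by linarith)
      exact mul_le_mul_of_nonneg_left hlog hc
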